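/- Let P ⊆ [n]^2 be a set of points containing no four points forming the corners of an axis-parallel rectangle (i.e., no two distinct rows and two distinct columns all four of whose intersections lie in P). Then |P| ≤ n^{3/2} + n. -/

import Mathlib

/-- Kővári–Sós–Turán: a subset of the grid `[n]^2` containing no four corners of an
axis-parallel rectangle has at most `n^(3/2) + n` points. -/
theorem rect_free_card_le (n : ℕ) (P : Finset (Fin n × Fin n))
    (h : ¬ ∃ r₁ r₂ c₁ c₂ : Fin n, r₁ ≠ r₂ ∧ c₁ ≠ c₂ ∧
      (r₁, c₁) ∈ P ∧ (r₁, c₂) ∈ P ∧ (r₂, c₁) ∈ P ∧ (r₂, c₂) ∈ P) :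
    (P.card : ℝ) ≤ (n : ℝ) ^ ((3 : ℝ) / 2) + n := by
  classical
  set d : Fin n → ℕ := fun r => (P.filter (fun p => p.1 = r)).card with hd
  have hsum : ∑ r, d r = P.card :=
    (Finset.card_eq_sum_card_fiberwise (f := Prod.fst) (t := Finset.univ)
      (fun x _ => Finset.mem_univ _)).symm
  set T : Finset ((Fin n × Fin n) × (Fin n × Fin n)) :=
    (P ×ˢ P).filter (fun pq => pq.1.1 = pq.2.1 ∧ pq.1 ≠ pq.2) with hTdef
  -- T has at most n*n elements since the column pair determines everything
  have hT : T.card ≤ n * n := by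
    have hle : T.card ≤ (Finset.univ : Finset (Fin n × Fin n)).card := by
      apply Finset.card_le_card_of_injOn (fun pq => (pq.1.2, pq.2.2))
        (fun _ _ => Finset.mem_univ _)
      intro a ha b hb hab
      obtain ⟨⟨ar, ac⟩, ar', ac'⟩ := a
      obtain ⟨⟨br, bc⟩, br', bc'⟩ := b
      rw [hTdef] at ha hb
      simp only [Finset.mem_coe, Finset.mem_filter, Finset.mem_product,
        Prod.mk.injEq] at ha hb hab ⊢
      obtain ⟨⟨hap, haq⟩, harow, hane⟩ := ha
      obtain ⟨⟨hbp, hbq⟩, hbrow, hbne⟩ := hb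
      obtain ⟨h1, h2⟩ := hab
      subst h1; subst h2; subst harow; subst hbrow
      have hcc : ac ≠ ac' := by intro hc; subst hc; simp at hane
      by_cases hr : ar = br
      · subst hr; simp
      · exact absurd ⟨ar, br, ac, ac', hr, hcc, hap, haq, hbp, hbq⟩ h
    simpa using hle
  -- T.card equals ∑ r, (d r * d r - d r)
  have hTcard : T.card = ∑ r, (d r * d r - d r) := by
    rw [Finset.card_eq_sum_card_fiberwise (f := fun pq => pq.1.1) (t := Finset.univ)
      (fun x _ => Finset.mem_univ _)]
    refine Finset.sum_congr rfl fun r _ => ?_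
    have heq : T.filter (fun pq => pq.1.1 = r) = (P.filter (fun p => p.1 = r)).offDiag := by
      ext pq
      rw [hTdef]
      simp only [Finset.mem_filter, Finset.mem_product, Finset.mem_offDiag]
      constructor
      · rintro ⟨⟨⟨hp, hq⟩, hrow, hne⟩, hr⟩
        exact ⟨⟨hp, hr⟩, ⟨hq, by rw [← hrow, hr]⟩, hne⟩
      · rintro ⟨⟨hp, hr1⟩, ⟨hq, hr2⟩, hne⟩
        exact ⟨⟨⟨hp, hq⟩, by rw [hr1, hr2], hne⟩, hr1⟩
    rw [heq, Finset.offDiag_card]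
  have hself : ∀ m : ℕ, m ≤ m * m := by
    intro m
    cases m with
    | zero => exact Nat.le_refl 0
    | succ k => exact Nat.le_mul_of_pos_left _ (Nat.succ_pos k)
  have hsq : ∑ r, d r * d r ≤ n * n + P.card := by
    have : ∑ r, d r * d r = ∑ r, ((d r * d r - d r) + d r) := by
      refine Finset.sum_congr rfl fun r _ => ?_
      rw [Nat.sub_add_cancel (hself (d r))]
    rw [this, Finset.sum_add_distrib, ← hTcard, hsum]
    exact Nat.add_le_add_right hT _
  -- Cauchy–Schwarz over ℝ
  have hCS : (P.card : ℝ) ^ 2 ≤ (n : ℝ) * ∑ r, (d r : ℝ) ^ 2 := by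
    have := sq_sum_le_card_mul_sum_sq (s := (Finset.univ : Finset (Fin n)))
      (f := fun r => (d r : ℝ))
    simpa [hsum, ← Nat.cast_sum] using this
  have hsqR : (∑ r, (d r : ℝ) ^ 2) ≤ (n : ℝ) * n + P.card := by
    have := hsq
    have : ((∑ r, d r * d r : ℕ) : ℝ) ≤ ((n * n + P.card : ℕ) : ℝ) := Nat.cast_le.mpr hsq
    push_cast at this
    simpa [sq] using this
  have key : (P.card : ℝ) ^ 2 ≤ (n : ℝ) ^ 3 + (n : ℝ) * P.card := by
    calc (P.card : ℝ) ^ 2 ≤ (n : ℝ) * ((n : ℝ) * n + P.card) :=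
          le_trans hCS (by
            apply mul_le_mul_of_nonneg_left hsqR (by positivity))
      _ = (n : ℝ) ^ 3 + (n : ℝ) * P.card := by ring
  -- Finish: let s = n^(3/2); s^2 = n^3, s ≥ 0
  set s : ℝ := (n : ℝ) ^ ((3 : ℝ) / 2) with hs
  have hs0 : 0 ≤ s := Real.rpow_nonneg (Nat.cast_nonneg n) _
  have hs2 : s ^ 2 = (n : ℝ) ^ 3 := by
    rw [hs, ← Real.rpow_natCast (((n : ℝ) ^ ((3:ℝ)/2))) 2, ← Real.rpow_mul (Nat.cast_nonneg n)]
    norm_num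
  have hx0 : (0 : ℝ) ≤ P.card := Nat.cast_nonneg _
  have hn0 : (0 : ℝ) ≤ n := Nat.cast_nonneg _
  nlinarith [sq_nonneg ((P.card : ℝ) - s - n), sq_nonneg ((P.card : ℝ) - s), mul_nonneg hs0 hn0]
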